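/- Let $s \in \mathbb{N}$ and $\nu \in \mathbb{N}_0^s$ be a multi-index. Then $\sum_{m \le \nu,\ m \ne \nu} \binom{\nu}{m}\, \frac{(|m|+1)!}{(\ln 2)^{|m|}} \le \frac{(|\nu|+1)!}{(\ln 2)^{|\nu|}}$, where the sum is over all multi-indices $m \in \mathbb{N}_0^s$ with $m_j \le \nu_j$ for all $j$ and $m \ne \nu$. -/

import Mathlib

open Finset

lemma nat_Iic_eq_range (n : ℕ) : Finset.Iic n = Finset.range (n + 1) := by
  ext x; simp [Nat.lt_succ_iff]

lemma two_var (g : ℕ → ℝ) (p q : ℕ) :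
    ∑ a ∈ range (p + 1), ∑ k ∈ range (q + 1),
        (p.choose a : ℝ) * (q.choose k : ℝ) * g (a + k)
      = ∑ t ∈ range (p + q + 1), ((p + q).choose t : ℝ) * g t := by
  have hrhs : ∑ t ∈ range (p + q + 1), ((p + q).choose t : ℝ) * g t
      = ∑ t ∈ range (p + q + 1), ∑ i ∈ range (t + 1),
          (p.choose i : ℝ) * (q.choose (t - i) : ℝ) * g (i + (t - i)) := by
    refine Finset.sum_congr rfl fun t ht => ?_
    rw [Nat.add_choose_eq, Finset.Nat.sum_antidiagonal_eq_sum_range_succ_mk]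
    push_cast
    rw [Finset.sum_mul]
    exact Finset.sum_congr rfl fun i hi => by
      rw [Nat.add_sub_cancel' (Nat.lt_succ_iff.mp (Finset.mem_range.mp hi))]
  rw [hrhs, Finset.sum_range_diag_flip (p + q + 1)
      (fun i j => (p.choose i : ℝ) * (q.choose j : ℝ) * g (i + j))]
  have hsplit : p + q + 1 = (p + 1) + q := by ring
  conv_rhs => rw [hsplit, Finset.sum_range_add]
  have hz : ∑ i ∈ range q, ∑ k ∈ range ((p+1) + q - ((p+1) + i)),
      (p.choose ((p+1)+i) : ℝ) * (q.choose k : ℝ) * g (((p+1)+i) + k) = 0 := by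
    refine Finset.sum_eq_zero fun i _ => Finset.sum_eq_zero fun k _ => ?_
    rw [Nat.choose_eq_zero_of_lt (by omega)]
    simp
  rw [hz, add_zero]
  refine Finset.sum_congr rfl fun a ha => ?_
  have hap : a ≤ p := Nat.lt_succ_iff.mp (Finset.mem_range.mp ha)
  refine Finset.sum_subset (Finset.range_subset_range.mpr (by omega)) fun k _ hk => ?_
  simp only [Finset.mem_range, not_lt] at hk
  rw [Nat.choose_eq_zero_of_lt (show q < k by omega)]
  simp

lemma key_sum (g : ℕ → ℝ) (s : ℕ) (ν : Fin s → ℕ) :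
    ∑ m ∈ Finset.Iic ν, (∏ j, ((ν j).choose (m j) : ℝ)) * g (∑ j, m j)
      = ∑ k ∈ range ((∑ j, ν j) + 1), ((∑ j, ν j).choose k : ℝ) * g k := by
  induction s generalizing g with
  | zero =>
      have h : Finset.Iic ν = {ν} := by
        ext m
        simp only [Finset.mem_Iic, Finset.mem_singleton]
        exact ⟨fun _ => Subsingleton.elim m ν, fun h => le_of_eq h⟩
      simp [h]
  | succ s ih =>
      have hbij : ∑ m ∈ Finset.Iic ν, (∏ j, ((ν j).choose (m j) : ℝ)) * g (∑ j, m j)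
          = ∑ p ∈ (Finset.Iic (ν 0)) ×ˢ (Finset.Iic (Fin.tail ν)),
              (∏ j, ((ν j).choose ((Fin.cons p.1 p.2 : Fin (s+1) → ℕ) j) : ℝ)) *
                g (∑ j, (Fin.cons p.1 p.2 : Fin (s+1) → ℕ) j) := by
        refine Finset.sum_nbij' (fun m => (m 0, Fin.tail m)) (fun p => Fin.cons p.1 p.2)
          ?_ ?_ ?_ ?_ ?_
        · intro m hm
          simp only [Finset.mem_Iic] at hm
          simp only [Finset.mem_product, Finset.mem_Iic]
          exact ⟨hm 0, fun j => hm j.succ⟩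
        · intro p hp
          simp only [Finset.mem_product, Finset.mem_Iic] at hp
          simp only [Finset.mem_Iic]
          intro j
          refine Fin.cases ?_ ?_ j
          · simpa using hp.1
          · intro i; simpa [Fin.tail] using hp.2 i
        · intro m _; simp [Fin.cons_self_tail]
        · intro p _; simp
        · intro m _; simp [Fin.cons_self_tail]
      rw [hbij, Finset.sum_product]
      have hstep : ∀ a ∈ Finset.Iic (ν 0),
          ∑ t ∈ Finset.Iic (Fin.tail ν),
              (∏ j, ((ν j).choose ((Fin.cons a t : Fin (s+1) → ℕ) j) : ℝ)) *
                g (∑ j, (Fin.cons a t : Fin (s+1) → ℕ) j)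
            = ∑ k ∈ range ((∑ j, Fin.tail ν j) + 1),
                ((ν 0).choose a : ℝ) * (((∑ j, Fin.tail ν j)).choose k : ℝ) * g (a + k) := by
        intro a _
        have : ∀ t : Fin s → ℕ,
            (∏ j, ((ν j).choose ((Fin.cons a t : Fin (s+1) → ℕ) j) : ℝ)) *
                g (∑ j, (Fin.cons a t : Fin (s+1) → ℕ) j)
              = ((ν 0).choose a : ℝ) *
                  ((∏ j, ((Fin.tail ν j).choose (t j) : ℝ)) * g (a + ∑ j, t j)) := by
          intro t
          rw [Fin.prod_univ_succ, Fin.sum_univ_succ]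
          simp [Fin.tail, mul_assoc]
        simp_rw [this, ← Finset.mul_sum, ih (fun k => g (a + k)) (Fin.tail ν),
          Finset.mul_sum, mul_assoc]
      rw [Finset.sum_congr rfl hstep]
      have h0 : Finset.Iic (ν 0) = range (ν 0 + 1) := nat_Iic_eq_range (ν 0)
      rw [h0, two_var g (ν 0) (∑ j, Fin.tail ν j)]
      have hsum : ∑ j, ν j = ν 0 + ∑ j, Fin.tail ν j := by
        rw [Fin.sum_univ_succ]; rfl
      rw [hsum]

/-- Multi-index estimate (equation (counting3) in the paper):
`∑_{m ≤ ν, m ≠ ν} (ν choose m) * (|m|+1)! / (ln 2)^{|m|} ≤ (|ν|+1)! / (ln 2)^{|ν|}`,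
where the sum is over all multi-indices `m : Fin s → ℕ` with `m ≤ ν` and `m ≠ ν`. -/
theorem sum_multichoose_factorial_succ_log2_le (s : ℕ) (ν : Fin s → ℕ) :
    ∑ m ∈ (Finset.Iic ν).erase ν,
        (∏ j, (Nat.choose (ν j) (m j) : ℝ)) *
          (Nat.factorial ((∑ j, m j) + 1) : ℝ) / Real.log 2 ^ (∑ j, m j)
      ≤ (Nat.factorial ((∑ j, ν j) + 1) : ℝ) / Real.log 2 ^ (∑ j, ν j) := by
  have hL : 0 < Real.log 2 := Real.log_pos (by norm_num)
  have hL1 : Real.exp (Real.log 2) = 2 := Real.exp_log (by norm_num)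
  set L := Real.log 2 with hLdef
  set n := ∑ j, ν j with hn
  set g : ℕ → ℝ := fun k => ((k + 1).factorial : ℝ) / L ^ k with hg
  have hterm : ∀ m : Fin s → ℕ,
      (∏ j, ((ν j).choose (m j) : ℝ)) * (((∑ j, m j) + 1).factorial : ℝ) / L ^ (∑ j, m j)
        = (∏ j, ((ν j).choose (m j) : ℝ)) * g (∑ j, m j) := fun m => mul_div_assoc _ _ _
  have hsplit : ∑ m ∈ (Finset.Iic ν).erase ν,
        (∏ j, ((ν j).choose (m j) : ℝ)) * g (∑ j, m j)
      = ∑ k ∈ range n, (n.choose k : ℝ) * g k := by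
    have h1 := Finset.sum_erase_add (Finset.Iic ν)
      (fun m => (∏ j, ((ν j).choose (m j) : ℝ)) * g (∑ j, m j))
      (Finset.mem_Iic.mpr (le_refl ν))
    have h3 := key_sum g s ν
    rw [Finset.sum_range_succ] at h3
    rw [h3] at h1
    simp only [Nat.choose_self, Nat.cast_one, one_mul, Finset.prod_const_one] at h1
    rw [← hn] at h1
    linarith
  calc ∑ m ∈ (Finset.Iic ν).erase ν,
        (∏ j, ((ν j).choose (m j) : ℝ)) * (((∑ j, m j) + 1).factorial : ℝ) / L ^ (∑ j, m j)
      = ∑ k ∈ range n, (n.choose k : ℝ) * g k := by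
        rw [← hsplit]; exact Finset.sum_congr rfl fun m _ => hterm m
    _ ≤ ∑ k ∈ range n, ((n + 1).factorial : ℝ) / L ^ n * (L ^ (n - k) / ((n - k).factorial : ℝ)) := by
        refine Finset.sum_le_sum fun k hk => ?_
        have hkn : k < n := Finset.mem_range.mp hk
        have hpow : L ^ n = L ^ k * L ^ (n - k) := by
          rw [← pow_add]; congr 1; omega
        have hcc : (n.choose k : ℝ) = (n.factorial : ℝ) / ((k.factorial : ℝ) * ((n - k).factorial : ℝ)) := by
          rw [eq_div_iff (by positivity), ← mul_assoc]
          exact_mod_cast Nat.choose_mul_factorial_mul_factorial hkn.le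
        have e1 : (n.choose k : ℝ) * g k
            = ((k : ℝ) + 1) * ((n.factorial : ℝ) / (((n - k).factorial : ℝ) * L ^ k)) := by
          simp only [hg]
          rw [Nat.factorial_succ, hcc]
          push_cast
          field_simp
        have e2 : ((n + 1).factorial : ℝ) / L ^ n * (L ^ (n - k) / ((n - k).factorial : ℝ))
            = ((n : ℝ) + 1) * ((n.factorial : ℝ) / (((n - k).factorial : ℝ) * L ^ k)) := by
          rw [Nat.factorial_succ, hpow]
          push_cast
          field_simp
        rw [e1, e2]
        have hkn' : ((k : ℝ) + 1) ≤ (n : ℝ) + 1 := by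
          have : (k : ℝ) ≤ n := by exact_mod_cast hkn.le
          linarith
        exact mul_le_mul_of_nonneg_right hkn' (by positivity)
    _ = ((n + 1).factorial : ℝ) / L ^ n * ∑ k ∈ range n, L ^ (n - k) / ((n - k).factorial : ℝ) := by
        rw [Finset.mul_sum]
    _ ≤ ((n + 1).factorial : ℝ) / L ^ n * 1 := by
        refine mul_le_mul_of_nonneg_left ?_ (by positivity)
        have hr := Finset.sum_range_reflect (fun j => L ^ (j + 1) / (((j + 1).factorial : ℝ))) n
        have hre : ∑ k ∈ range n, L ^ (n - k) / (((n - k).factorial : ℝ))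
            = ∑ j ∈ range n, L ^ (j + 1) / (((j + 1).factorial : ℝ)) := by
          rw [← hr]
          refine Finset.sum_congr rfl fun k hk => ?_
          have hkn : k < n := Finset.mem_range.mp hk
          have h5 : n - 1 - k + 1 = n - k := by omega
          rw [h5]
        have hexp : ∑ i ∈ range (n + 1), L ^ i / ((i.factorial : ℝ)) ≤ 2 := by
          have := Real.sum_le_exp_of_nonneg hL.le (n + 1)
          rw [hL1] at this
          exact this
        have hshift : ∑ i ∈ range (n + 1), L ^ i / ((i.factorial : ℝ))
            = (∑ j ∈ range n, L ^ (j + 1) / (((j + 1).factorial : ℝ))) + 1 := by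
          rw [Finset.sum_range_succ' (fun i => L ^ i / ((i.factorial : ℝ))) n]
          simp
        rw [hre]
        rw [hshift] at hexp
        linarith
    _ = ((n + 1).factorial : ℝ) / L ^ n := mul_one _
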